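/- Under MTS alone, the sharp upper bound on PN = Pr{Y(0)=0 | Y=1, D=1} equals min{P00·Q1/(P11·Q0), 1}: the maximum of (P11 − q8)/P11 over q7, q8 satisfying 0 ≤ q7 ≤ P01, 0 ≤ q8 ≤ P11, P10·Q1/Q0 ≤ q7+q8 ≤ Q1 equals (P11 − max{0, P10·Q1/Q0 − P01})/P11 = min{P00·Q1/(P11·Q0), 1}, attained at q7 = P01, q8 = max{0, P10·Q1/Q0 − P01}; and the minimum is 0. -/

import Mathlib

/-- Under MTS alone, the sharp upper bound on `PN = (P11-q8)/P11` equals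
`min (P00*Q1/(P11*Q0)) 1`, and the sharp lower bound is `0`. -/
theorem stmt11 (P00 P10 P01 P11 : ℝ)
    (h00 : 0 < P00) (h10 : 0 < P10) (h01 : 0 < P01) (h11 : 0 < P11)
    (hsum : P00 + P10 + P01 + P11 = 1) :
    IsGreatest
      {x : ℝ | ∃ q7 q8 : ℝ,
        0 ≤ q7 ∧ q7 ≤ P01 ∧ 0 ≤ q8 ∧ q8 ≤ P11 ∧
        P10 * (P01 + P11) / (P00 + P10) ≤ q7 + q8 ∧ q7 + q8 ≤ P01 + P11 ∧
        x = (P11 - q8) / P11}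
      (min (P00 * (P01 + P11) / (P11 * (P00 + P10))) 1) ∧
    IsLeast
      {x : ℝ | ∃ q7 q8 : ℝ,
        0 ≤ q7 ∧ q7 ≤ P01 ∧ 0 ≤ q8 ∧ q8 ≤ P11 ∧
        P10 * (P01 + P11) / (P00 + P10) ≤ q7 + q8 ∧ q7 + q8 ≤ P01 + P11 ∧
        x = (P11 - q8) / P11} 0 := by
  have hQ0 : 0 < P00 + P10 := by linarith
  have hQ1 : 0 < P01 + P11 := by linarith
  set a := P10 * (P01 + P11) / (P00 + P10) with ha
  have haQ0 : a * (P00 + P10) = P10 * (P01 + P11) := by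
    rw [ha]; exact div_mul_cancel₀ _ hQ0.ne'
  have ha0 : 0 < a := by
    rw [ha]; positivity
  have haQ1 : a ≤ P01 + P11 := by
    rw [ha, div_le_iff₀ hQ0]; nlinarith
  constructor
  · constructor
    · refine ⟨min P01 a, max 0 (a - P01), le_min h01.le ha0.le, min_le_left _ _,
        le_max_left _ _, ?_, ?_, ?_, ?_⟩
      · rcases le_total a P01 with h | h <;>
          simp [max_eq_left, max_eq_right, sub_nonpos.mpr h, sub_nonneg.mpr h] <;> linarith
      · have : min P01 a + max 0 (a - P01) = a := by
          rcases le_total a P01 with h | h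
          · rw [min_eq_right h, max_eq_left (by linarith)]; ring
          · rw [min_eq_left h, max_eq_right (by linarith)]; ring
        rw [this]
      · have : min P01 a + max 0 (a - P01) = a := by
          rcases le_total a P01 with h | h
          · rw [min_eq_right h, max_eq_left (by linarith)]; ring
          · rw [min_eq_left h, max_eq_right (by linarith)]; ring
        rw [this]; exact haQ1
      · rcases le_total a P01 with h | h
        · rw [max_eq_left (by linarith)]
          have h1 : (1:ℝ) ≤ P00 * (P01 + P11) / (P11 * (P00 + P10)) := by
            rw [le_div_iff₀ (by positivity)]
            have : a * (P00 + P10) ≤ P01 * (P00 + P10) :=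
              mul_le_mul_of_nonneg_right h hQ0.le
            nlinarith
          rw [min_eq_right h1]
          field_simp
          ring
        · rw [max_eq_right (by linarith)]
          have h1 : P00 * (P01 + P11) / (P11 * (P00 + P10)) ≤ 1 := by
            rw [div_le_one (by positivity)]
            have : P01 * (P00 + P10) ≤ a * (P00 + P10) :=
              mul_le_mul_of_nonneg_right h hQ0.le
            nlinarith
          rw [min_eq_left h1]
          rw [div_eq_div_iff (by positivity : (0:ℝ) < P11 * (P00 + P10)).ne' h11.ne']
          nlinarith
    · rintro x ⟨q7, q8, hq70, hq7, hq80, hq8, hlo, hhi, rfl⟩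
      refine le_min ?_ ?_
      · have hq8a : a - P01 ≤ q8 := by linarith
        rw [div_le_div_iff₀ h11 (by positivity)]
        have : (a - P01) * (P00 + P10) ≤ q8 * (P00 + P10) :=
          mul_le_mul_of_nonneg_right hq8a hQ0.le
        nlinarith
      · rw [div_le_one h11]; linarith
  · constructor
    · exact ⟨P01, P11, h01.le, le_refl _, h11.le, le_refl _, haQ1, le_refl _, by
        field_simp; ring⟩
    · rintro x ⟨q7, q8, hq70, hq7, hq80, hq8, hlo, hhi, rfl⟩
      apply div_nonneg (by linarith) h11.le
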